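/- Energy estimate for the Hermite spectral viscosity scheme with viscosity term ε L_α v (Lemma on apriori estimates): Let α > 0, T > 0, ε > 0, N ≥ 0 an integer, f ∈ C¹(ℝ) with f(0) = 0 admitting a C¹ primitive F̄ of y ↦ y f'(y), and u₀ ∈ L²(ℝ). Suppose v : [0,T] → R_N is of the form v(t) = Σ_{k=0}^N v̂_k(t) H_k^α with each v̂_k differentiable on [0,T], v(0) = P_N u₀, and for every t ∈ [0,T] and every φ ∈ R_N: ∫_ℝ (∂_t v)(t,x) φ(x) dx + ∫_ℝ ∂_x(P_{N+1}(f∘v(t)))(x) φ(x) dx + ε ∫_ℝ (L_α v(t))(x) φ(x) dx = 0. Then ‖v(T)‖² + 2ε ∫_0^T ‖D_x v(t)‖² dt ≤ ‖P_N u₀‖² ≤ ‖u₀‖²; in particular ‖v(t)‖ ≤ ‖u₀‖ for t = T and ∫_0^T ‖D_x v(t)‖² dt ≤ ‖u₀‖²/(2ε). -/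

import Mathlib

open MeasureTheory Real
open Polynomial Filter Set Topology

/-- Physicists' Hermite polynomial: `ℋ_n(x) = (−1)^n e^{x²} (dⁿ/dxⁿ) e^{−x²}`. -/
noncomputable def physHermite (n : ℕ) : ℝ → ℝ :=
  fun x => (-1 : ℝ) ^ n * Real.exp (x ^ 2) * iteratedDeriv n (fun y => Real.exp (-(y ^ 2))) x

/-- Generalized Hermite function `H_n^α(x) = (α/(2^n n! √π))^{1/2} ℋ_n(αx) e^{−α²x²/2}`. -/
noncomputable def genHermite (α : ℝ) (n : ℕ) : ℝ → ℝ :=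
  fun x => Real.sqrt (α / (2 ^ n * n.factorial * Real.sqrt Real.pi)) *
    physHermite n (α * x) * Real.exp (-(α ^ 2 * x ^ 2) / 2)

/-- Integer-indexed generalized Hermite function, with the convention `H_n^α ≡ 0` for `n < 0`. -/
noncomputable def genHermiteZ (α : ℝ) (n : ℤ) : ℝ → ℝ :=
  fun x => if 0 ≤ n then genHermite α n.toNat x else 0

/-- The operator `D_x = ∂_x + α² x`. -/
noncomputable def Dx (α : ℝ) (u : ℝ → ℝ) : ℝ → ℝ :=
  fun x => deriv u x + α ^ 2 * x * u x

/-- The Sturm–Liouville operator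
`L_α(u)(x) = −e^{α²x²/2} ∂_x(e^{−α²x²} ∂_x(e^{α²x²/2} u(x)))`. -/
noncomputable def SLop (α : ℝ) (u : ℝ → ℝ) : ℝ → ℝ :=
  fun x => -(Real.exp (α ^ 2 * x ^ 2 / 2) *
    deriv (fun y => Real.exp (-(α ^ 2 * y ^ 2)) *
      deriv (fun z => Real.exp (α ^ 2 * z ^ 2 / 2) * u z) y) x)



/-! ## Auxiliary development -/

/-- Physicists' Hermite polynomials as `Polynomial ℝ`. -/
noncomputable def Hp : ℕ → Polynomial ℝ
  | 0 => 1
  | n+1 => 2 * Polynomial.X * Hp n - Polynomial.derivative (Hp n)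

lemma Hp_deriv_succ (n : ℕ) :
    Polynomial.derivative (Hp (n+1)) = Polynomial.C ((2:ℝ)*(n+1)) * Hp n := by
  induction n with
  | zero => simp [Hp, map_ofNat]
  | succ n ih =>
    have h2 : Hp (n+2) = 2 * X * Hp (n+1) - Polynomial.derivative (Hp (n+1)) := rfl
    have h3 : Hp (n+1) = 2 * X * Hp n - Polynomial.derivative (Hp n) := rfl
    have ihd : Polynomial.derivative (Polynomial.C ((2:ℝ)*(n+1)) * Hp n)
        = Polynomial.C ((2:ℝ)*(n+1)) * Polynomial.derivative (Hp n) := by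
      rw [derivative_mul, derivative_C]; ring
    rw [h2, derivative_sub, derivative_mul, ih, ihd]
    simp only [map_mul, map_add, map_one, map_ofNat, Polynomial.C_eq_natCast,
      derivative_mul, derivative_X, derivative_ofNat, derivative_natCast, derivative_one]
    push_cast
    linear_combination (-((2:Polynomial ℝ) * n + 2)) * h3

lemma Hp_deriv (n : ℕ) :
    Polynomial.derivative (Hp n) = Polynomial.C ((2:ℝ)*n) * Hp (n-1) := by
  cases n with
  | zero => simp [Hp]
  | succ n => simpa using Hp_deriv_succ n

lemma Hp_X_mul (n : ℕ) :
    (2 : Polynomial ℝ) * Polynomial.X * Hp n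
      = Hp (n+1) + Polynomial.C ((2:ℝ)*n) * Hp (n-1) := by
  have h : Hp (n+1) = 2 * X * Hp n - Polynomial.derivative (Hp n) := rfl
  rw [Hp_deriv n] at h
  linear_combination -h

lemma Hp_sl (n : ℕ) :
    (2 : Polynomial ℝ) * Polynomial.X * Polynomial.derivative (Hp n)
        - Polynomial.derivative (Polynomial.derivative (Hp n))
      = Polynomial.C ((2:ℝ)*n) * Hp n := by
  cases n with
  | zero => simp [Hp]
  | succ n =>
    rw [Hp_deriv_succ n, derivative_mul, derivative_C]
    have h : Hp (n+1) = 2 * X * Hp n - Polynomial.derivative (Hp n) := rfl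
    push_cast
    linear_combination (-(Polynomial.C ((2:ℝ)*(n+1)))) * h

lemma iterGauss (n : ℕ) : iteratedDeriv n (fun y => Real.exp (-(y ^ 2)))
    = fun x => (-1:ℝ)^n * Polynomial.eval x (Hp n) * Real.exp (-(x^2)) := by
  induction n with
  | zero => funext x; simp [Hp]
  | succ n ih =>
    rw [iteratedDeriv_succ, ih]
    funext x
    have hexp : HasDerivAt (fun y : ℝ => Real.exp (-(y^2)))
        (Real.exp (-(x^2)) * (-((2:ℕ)*x^1))) x := by
      exact ((hasDerivAt_pow 2 x).neg).exp
    have h1 : HasDerivAt (fun y : ℝ => (-1:ℝ)^n * Polynomial.eval y (Hp n) * Real.exp (-(y^2)))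
        ((Polynomial.eval x (Polynomial.derivative (Hp n)) * ((-1:ℝ)^n))
            * Real.exp (-(x^2))
          + ((-1:ℝ)^n * Polynomial.eval x (Hp n)) * (Real.exp (-(x^2)) * (-((2:ℕ)*x^1)))) x := by
      exact HasDerivAt.mul (by simpa [mul_comm] using ((Hp n).hasDerivAt x).const_mul ((-1:ℝ)^n))
        hexp
    rw [h1.deriv]
    have e2 : Polynomial.eval x (Hp (n+1))
        = 2*x*Polynomial.eval x (Hp n) - Polynomial.eval x (Polynomial.derivative (Hp n)) := by
      have : Hp (n+1) = 2 * Polynomial.X * Hp n - Polynomial.derivative (Hp n) := rfl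
      rw [this]; simp
    rw [e2, pow_succ]
    push_cast
    ring

lemma physHermite_eq (n : ℕ) (x : ℝ) : physHermite n x = Polynomial.eval x (Hp n) := by
  rw [physHermite, iterGauss]
  have h2 : Real.exp (x^2) * Real.exp (-(x^2)) = 1 := by rw [← Real.exp_add]; simp
  have h1 : ((-1:ℝ))^n * ((-1:ℝ))^n = 1 := by rw [← mul_pow]; norm_num
  calc (-1:ℝ)^n * Real.exp (x^2) * ((-1:ℝ)^n * Polynomial.eval x (Hp n) * Real.exp (-(x^2)))
      = (((-1:ℝ))^n * ((-1:ℝ))^n) * (Real.exp (x^2) * Real.exp (-(x^2)))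
          * Polynomial.eval x (Hp n) := by ring
    _ = Polynomial.eval x (Hp n) := by rw [h1, h2]; ring

/-- normalization constant -/
noncomputable def cst (α : ℝ) (n : ℕ) : ℝ :=
  Real.sqrt (α / (2 ^ n * n.factorial * Real.sqrt Real.pi))

noncomputable def pg (α : ℝ) (q : Polynomial ℝ) : ℝ → ℝ :=
  fun x => Polynomial.eval (α*x) q * Real.exp (-(α^2*x^2)/2)

lemma gH_eq_pg (α : ℝ) (n : ℕ) :
    genHermite α n = pg α (Polynomial.C (cst α n) * Hp n) := by
  funext x
  simp [genHermite, pg, cst, physHermite_eq, Polynomial.eval_mul]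

lemma cst_succ {α : ℝ} (hα : 0 < α) (n : ℕ) :
    cst α n = Real.sqrt (2*((n:ℝ)+1)) * cst α (n+1) := by
  have hπ : (0:ℝ) < Real.sqrt Real.pi := Real.sqrt_pos.2 Real.pi_pos
  have hf : (0:ℝ) < (n.factorial : ℝ) := by exact_mod_cast n.factorial_pos
  rw [cst, cst, ← Real.sqrt_mul (by positivity)]
  congr 1
  rw [pow_succ]
  push_cast [Nat.factorial_succ]
  field_simp

lemma cst_mul_n {α : ℝ} (hα : 0 < α) (n : ℕ) :
    (n:ℝ) * cst α n = Real.sqrt ((n:ℝ)/2) * cst α (n-1) := by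
  cases n with
  | zero => simp
  | succ m =>
    have h := cst_succ hα m
    simp only [Nat.add_sub_cancel]
    push_cast
    rw [h, ← mul_assoc, ← Real.sqrt_mul (by positivity)]
    rw [show ((m:ℝ)+1)/2 * (2*((m:ℝ)+1)) = ((m:ℝ)+1)^2 by ring, Real.sqrt_sq (by positivity)]

lemma cst_half {α : ℝ} (hα : 0 < α) (n : ℕ) :
    cst α n / 2 = Real.sqrt (((n:ℝ)+1)/2) * cst α (n+1) := by
  rw [cst_succ hα n, show (2:ℝ)*((n:ℝ)+1) = 4*(((n:ℝ)+1)/2) by ring,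
    Real.sqrt_mul (by norm_num), show Real.sqrt 4 = 2 by
      rw [show (4:ℝ) = 2^2 by norm_num, Real.sqrt_sq (by norm_num)]]
  ring

lemma sqrt_two_n (n : ℕ) : Real.sqrt (2*(n:ℝ)) = 2 * Real.sqrt ((n:ℝ)/2) := by
  rw [show (2:ℝ)*(n:ℝ) = 4*((n:ℝ)/2) by ring, Real.sqrt_mul (by norm_num),
    show Real.sqrt 4 = 2 by rw [show (4:ℝ) = 2^2 by norm_num, Real.sqrt_sq (by norm_num)]]

lemma pg_hasDerivAt (α : ℝ) (q : Polynomial ℝ) (x : ℝ) :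
    HasDerivAt (pg α q)
      (α * pg α (Polynomial.derivative q - Polynomial.X * q) x) x := by
  have h1 : HasDerivAt (fun y : ℝ => Polynomial.eval (α*y) q)
      (Polynomial.eval (α*x) (Polynomial.derivative q) * (α*1)) x :=
    HasDerivAt.comp x (Polynomial.hasDerivAt q (α*x)) ((hasDerivAt_id x).const_mul α)
  have hi : HasDerivAt (fun y : ℝ => -(α^2*y^2)/2) (-(α^2*((2:ℕ)*x^1))/2) x :=
    (((hasDerivAt_pow 2 x).const_mul (α^2)).neg).div_const 2
  have h2 := hi.exp
  have := h1.fun_mul h2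
  refine this.congr_deriv ?_
  simp only [pg, Polynomial.eval_sub, Polynomial.eval_mul, Polynomial.eval_X]
  push_cast
  ring

/-- derivative of genHermite, as a combination -/
noncomputable def gHd (α : ℝ) (n : ℕ) : ℝ → ℝ := fun x =>
  α * Real.sqrt ((n:ℝ)/2) * genHermite α (n-1) x
    - α * Real.sqrt (((n:ℝ)+1)/2) * genHermite α (n+1) x

lemma gH_hasDerivAt {α : ℝ} (hα : 0 < α) (n : ℕ) (x : ℝ) :
    HasDerivAt (genHermite α n) (gHd α n x) x := by
  have h := pg_hasDerivAt α (Polynomial.C (cst α n) * Hp n) x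
  simp only [gHd, gH_eq_pg]
  convert h using 1
  have e1 : Polynomial.eval (α*x) (Polynomial.derivative (Hp n))
      = 2*(n:ℝ)*Polynomial.eval (α*x) (Hp (n-1)) := by
    rw [Hp_deriv]; simp
  have e2 : 2*(α*x)*Polynomial.eval (α*x) (Hp n)
      = Polynomial.eval (α*x) (Hp (n+1)) + 2*(n:ℝ)*Polynomial.eval (α*x) (Hp (n-1)) := by
    have := congrArg (Polynomial.eval (α*x)) (Hp_X_mul n)
    simpa using this
  have e3 := cst_mul_n hα n
  have e4 := cst_half hα n
  simp only [pg, Polynomial.eval_sub, Polynomial.eval_mul, Polynomial.eval_C, Polynomial.eval_X,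
    Polynomial.derivative_mul, Polynomial.derivative_C, Polynomial.eval_add, zero_mul, zero_add]
  set E := Real.exp (-(α^2*x^2)/2) with hE
  set Pm := Polynomial.eval (α*x) (Hp (n-1)) with hPm
  set P := Polynomial.eval (α*x) (Hp n) with hP
  set Pp := Polynomial.eval (α*x) (Hp (n+1)) with hPp
  linear_combination (-(α*(cst α n)*E)) * e1 + (α*E*(cst α n)/2) * e2
    + (-(α*E*Pm)) * e3 + (α*E*Pp) * e4

lemma sqrt_two_mul_half (a : ℝ) : Real.sqrt (2*a) = 2 * Real.sqrt (a/2) := by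
  rw [show (2:ℝ)*a = 4*(a/2) by ring, Real.sqrt_mul (by norm_num),
    show Real.sqrt 4 = 2 by rw [show (4:ℝ) = 2^2 by norm_num, Real.sqrt_sq (by norm_num)]]

lemma x_gH {α : ℝ} (hα : 0 < α) (n : ℕ) (x : ℝ) :
    α^2*x*genHermite α n x
      = α * Real.sqrt ((n:ℝ)/2) * genHermite α (n-1) x
        + α * Real.sqrt (((n:ℝ)+1)/2) * genHermite α (n+1) x := by
  have e2 : 2*(α*x)*Polynomial.eval (α*x) (Hp n)
      = Polynomial.eval (α*x) (Hp (n+1)) + 2*(n:ℝ)*Polynomial.eval (α*x) (Hp (n-1)) := by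
    have := congrArg (Polynomial.eval (α*x)) (Hp_X_mul n)
    simpa using this
  have e3 := cst_mul_n hα n
  have e4 := cst_half hα n
  simp only [gH_eq_pg, pg, Polynomial.eval_mul, Polynomial.eval_C]
  set E := Real.exp (-(α^2*x^2)/2) with hE
  set Pm := Polynomial.eval (α*x) (Hp (n-1)) with hPm
  set P := Polynomial.eval (α*x) (Hp n) with hP
  set Pp := Polynomial.eval (α*x) (Hp (n+1)) with hPp
  linear_combination (α*E*(cst α n)/2) * e2 + (α*E*Pm) * e3 + (α*E*Pp) * e4

lemma Dx_gH {α : ℝ} (hα : 0 < α) (n : ℕ) (x : ℝ) :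
    gHd α n x + α^2*x*genHermite α n x
      = α * Real.sqrt (2*(n:ℝ)) * genHermite α (n-1) x := by
  simp only [gHd, sqrt_two_mul_half]
  linear_combination x_gH hα n x

lemma R_gH {α : ℝ} (hα : 0 < α) (n : ℕ) (x : ℝ) :
    α^2*x*genHermite α n x - gHd α n x
      = α * Real.sqrt (2*((n:ℝ)+1)) * genHermite α (n+1) x := by
  simp only [gHd, sqrt_two_mul_half]
  linear_combination x_gH hα n x

/-! ### integrability and decay -/

lemma integrable_pow_gauss {b : ℝ} (hb : 0 < b) (n : ℕ) :
    Integrable fun x : ℝ => x^n * Real.exp (-b*x^2) := by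
  have h := integrable_rpow_mul_exp_neg_mul_sq hb
    (s := (n:ℝ)) (neg_one_lt_zero.trans_le (Nat.cast_nonneg n))
  simpa [Real.rpow_natCast] using h

lemma integrable_poly_gauss {b : ℝ} (hb : 0 < b) (p : Polynomial ℝ) :
    Integrable fun x : ℝ => Polynomial.eval x p * Real.exp (-b*x^2) := by
  induction p using Polynomial.induction_on' with
  | add p q hp hq => simpa [add_mul] using hp.fun_add hq
  | monomial n a =>
      simpa [Polynomial.eval_monomial, mul_assoc] using (integrable_pow_gauss hb n).const_mul a

lemma tendsto_poly_gauss_atTop {b : ℝ} (hb : 0 < b) (p : Polynomial ℝ) :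
    Tendsto (fun x : ℝ => Polynomial.eval x p * Real.exp (-b*x^2)) atTop (𝓝 0) := by
  induction p using Polynomial.induction_on' with
  | add p q hp hq => simpa [add_mul] using hp.add hq
  | monomial n a =>
      have hhalf : Tendsto (fun x:ℝ => Real.exp (-(1/2) * x)) atTop (𝓝 0) := by
        have h := tendsto_exp_neg_atTop_nhds_zero.comp
          (tendsto_id.const_mul_atTop (by norm_num : (0:ℝ) < 1/2))
        refine h.congr fun x => ?_
        simp [Function.comp, neg_mul]
      have h0 := (rpow_mul_exp_neg_mul_sq_isLittleO_exp_neg hb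
        ((n:ℝ))).tendsto_zero_of_tendsto hhalf
      have h1 := h0.const_mul a
      simpa [Real.rpow_natCast, Polynomial.eval_monomial, mul_assoc] using h1

lemma tendsto_poly_gauss_atBot {b : ℝ} (hb : 0 < b) (p : Polynomial ℝ) :
    Tendsto (fun x : ℝ => Polynomial.eval x p * Real.exp (-b*x^2)) atBot (𝓝 0) := by
  have h := (tendsto_poly_gauss_atTop hb (p.comp (-Polynomial.X))).comp tendsto_neg_atBot_atTop
  refine h.congr fun x => ?_
  simp only [Function.comp_apply, Polynomial.eval_comp, Polynomial.eval_neg, Polynomial.eval_X]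
  ring_nf

lemma pg_eq_poly_gauss (α : ℝ) (q : Polynomial ℝ) (x : ℝ) :
    pg α q x = Polynomial.eval x (q.comp (Polynomial.C α * Polynomial.X))
      * Real.exp (-(α^2/2)*x^2) := by
  simp only [pg, Polynomial.eval_comp, Polynomial.eval_mul, Polynomial.eval_C, Polynomial.eval_X]
  ring_nf

lemma pg_integrable {α : ℝ} (hα : 0 < α) (q : Polynomial ℝ) : Integrable (pg α q) := by
  have h := integrable_poly_gauss (show (0:ℝ) < α^2/2 by positivity)
    (q.comp (Polynomial.C α * Polynomial.X))
  exact h.congr (Filter.Eventually.of_forall fun x => (pg_eq_poly_gauss α q x).symm)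

lemma pg_tendsto_atTop {α : ℝ} (hα : 0 < α) (q : Polynomial ℝ) :
    Tendsto (pg α q) atTop (𝓝 0) := by
  have h := tendsto_poly_gauss_atTop (show (0:ℝ) < α^2/2 by positivity)
    (q.comp (Polynomial.C α * Polynomial.X))
  exact h.congr fun x => (pg_eq_poly_gauss α q x).symm

lemma pg_tendsto_atBot {α : ℝ} (hα : 0 < α) (q : Polynomial ℝ) :
    Tendsto (pg α q) atBot (𝓝 0) := by
  have h := tendsto_poly_gauss_atBot (show (0:ℝ) < α^2/2 by positivity)
    (q.comp (Polynomial.C α * Polynomial.X))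
  exact h.congr fun x => (pg_eq_poly_gauss α q x).symm

lemma pg_mul_pg_integrable {α : ℝ} (hα : 0 < α) (q r : Polynomial ℝ) :
    Integrable fun x => pg α q x * pg α r x := by
  have h := integrable_poly_gauss (show (0:ℝ) < α^2 by positivity)
    ((q*r).comp (Polynomial.C α * Polynomial.X))
  refine h.congr (Filter.Eventually.of_forall fun x => ?_)
  simp only [pg, Polynomial.eval_comp, Polynomial.eval_mul, Polynomial.eval_C, Polynomial.eval_X]
  rw [show (-(α^2) * x^2 : ℝ) = (-(α^2*x^2)/2) + (-(α^2*x^2)/2) by ring, Real.exp_add]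
  ring

lemma x_pg_mul_pg_integrable {α : ℝ} (hα : 0 < α) (q r : Polynomial ℝ) :
    Integrable fun x => x * (pg α q x * pg α r x) := by
  have h := integrable_poly_gauss (show (0:ℝ) < α^2 by positivity)
    (Polynomial.X * ((q*r).comp (Polynomial.C α * Polynomial.X)))
  refine h.congr (Filter.Eventually.of_forall fun x => ?_)
  simp only [pg, Polynomial.eval_comp, Polynomial.eval_mul, Polynomial.eval_C, Polynomial.eval_X]
  rw [show (-(α^2) * x^2 : ℝ) = (-(α^2*x^2)/2) + (-(α^2*x^2)/2) by ring, Real.exp_add]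
  ring

/-! ### ψ-level facts -/

lemma psi_int {α : ℝ} (hα : 0 < α) (n m : ℕ) :
    Integrable fun x => genHermite α n x * genHermite α m x := by
  simp only [gH_eq_pg]; exact pg_mul_pg_integrable hα _ _

lemma psi_x_int {α : ℝ} (hα : 0 < α) (n m : ℕ) :
    Integrable fun x => x * (genHermite α n x * genHermite α m x) := by
  simp only [gH_eq_pg]; exact x_pg_mul_pg_integrable hα _ _

lemma psi_integrable {α : ℝ} (hα : 0 < α) (n : ℕ) : Integrable (genHermite α n) := by
  rw [gH_eq_pg]; exact pg_integrable hα _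

lemma psi_tendsto_atTop {α : ℝ} (hα : 0 < α) (n : ℕ) :
    Tendsto (genHermite α n) atTop (𝓝 0) := by
  rw [gH_eq_pg]; exact pg_tendsto_atTop hα _

lemma psi_tendsto_atBot {α : ℝ} (hα : 0 < α) (n : ℕ) :
    Tendsto (genHermite α n) atBot (𝓝 0) := by
  rw [gH_eq_pg]; exact pg_tendsto_atBot hα _

lemma int_gHd_right {α : ℝ} (hα : 0 < α) (n m : ℕ) :
    Integrable fun x => genHermite α n x * gHd α m x := by
  have h1 := (psi_int hα n (m-1)).const_mul (α * Real.sqrt ((m:ℝ)/2))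
  have h2 := (psi_int hα n (m+1)).const_mul (α * Real.sqrt (((m:ℝ)+1)/2))
  refine (h1.sub h2).congr (Filter.Eventually.of_forall fun x => ?_)
  simp only [Pi.sub_apply, gHd]; ring

lemma int_gHd_left {α : ℝ} (hα : 0 < α) (n m : ℕ) :
    Integrable fun x => gHd α n x * genHermite α m x := by
  refine (int_gHd_right hα m n).congr (Filter.Eventually.of_forall fun x => ?_)
  ring

/-! ### FTC on ℝ -/

lemma integral_deriv_eq_zero (g g' : ℝ → ℝ) (hd : ∀ x, HasDerivAt g (g' x) x)
    (hi : Integrable g') {L : ℝ} (ht : Tendsto g atTop (𝓝 L)) (hb : Tendsto g atBot (𝓝 L)) :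
    ∫ x, g' x = 0 := by
  rw [← intervalIntegral.integral_Iic_add_Ioi (b := (0:ℝ)) hi.integrableOn hi.integrableOn]
  have h1 : ∫ x in Iic (0:ℝ), g' x = g 0 - L :=
    integral_Iic_of_hasDerivAt_of_tendsto' (fun x _ => hd x) hi.integrableOn hb
  have h2 : ∫ x in Ioi (0:ℝ), g' x = L - g 0 :=
    integral_Ioi_of_hasDerivAt_of_tendsto' (fun x _ => hd x) hi.integrableOn ht
  rw [h1, h2]; ring

lemma psi_ibp {α : ℝ} (hα : 0 < α) (n m : ℕ) :
    (∫ x, gHd α n x * genHermite α m x) + (∫ x, genHermite α n x * gHd α m x) = 0 := by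
  have hint := (int_gHd_left hα n m).add (int_gHd_right hα n m)
  rw [← integral_add (int_gHd_left hα n m) (int_gHd_right hα n m)]
  refine integral_deriv_eq_zero (fun x => genHermite α n x * genHermite α m x) _
    (fun x => (gH_hasDerivAt hα n x).mul (gH_hasDerivAt hα m x)) hint (L := 0) ?_ ?_
  · simpa using (psi_tendsto_atTop hα n).mul (psi_tendsto_atTop hα m)
  · simpa using (psi_tendsto_atBot hα n).mul (psi_tendsto_atBot hα m)

/-! ### orthonormality -/

lemma ladder {α : ℝ} (hα : 0 < α) (n m : ℕ) :
    α * Real.sqrt (2*((m:ℝ)+1)) * ∫ x, genHermite α n x * genHermite α (m+1) x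
      = α * Real.sqrt (2*(n:ℝ)) * ∫ x, genHermite α (n-1) x * genHermite α m x := by
  have i_x : Integrable fun x => genHermite α n x * (α^2*x*genHermite α m x) := by
    refine ((psi_x_int hα n m).const_mul (α^2)).congr
      (Filter.Eventually.of_forall fun x => ?_)
    ring
  have iR := int_gHd_right hα n m
  have iL := int_gHd_left hα n m
  have hLHS : α * Real.sqrt (2*((m:ℝ)+1)) * ∫ x, genHermite α n x * genHermite α (m+1) x
      = (∫ x, genHermite α n x * (α^2*x*genHermite α m x))
        - ∫ x, genHermite α n x * gHd α m x := by
    rw [← integral_sub i_x iR, ← MeasureTheory.integral_const_mul]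
    refine integral_congr_ae (Filter.Eventually.of_forall fun x => ?_)
    simp only
    rw [show genHermite α n x * (α^2*x*genHermite α m x) - genHermite α n x * gHd α m x
        = genHermite α n x * (α^2*x*genHermite α m x - gHd α m x) by ring, R_gH hα m x]
    ring
  have i_x' : Integrable fun x => α^2*x*genHermite α n x * genHermite α m x := by
    refine ((psi_x_int hα n m).const_mul (α^2)).congr
      (Filter.Eventually.of_forall fun x => ?_)
    ring
  have hRHS : α * Real.sqrt (2*(n:ℝ)) * ∫ x, genHermite α (n-1) x * genHermite α m x
      = (∫ x, gHd α n x * genHermite α m x)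
        + ∫ x, α^2*x*genHermite α n x * genHermite α m x := by
    rw [← integral_add iL i_x', ← MeasureTheory.integral_const_mul]
    refine integral_congr_ae (Filter.Eventually.of_forall fun x => ?_)
    simp only
    rw [show gHd α n x * genHermite α m x + α^2*x*genHermite α n x * genHermite α m x
        = (gHd α n x + α^2*x*genHermite α n x) * genHermite α m x by ring, Dx_gH hα n x]
    ring
  have hswap : (∫ x, genHermite α n x * (α^2*x*genHermite α m x))
      = ∫ x, α^2*x*genHermite α n x * genHermite α m x := by
    refine integral_congr_ae (Filter.Eventually.of_forall fun x => ?_)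
    simp only; ring
  have hibp := psi_ibp hα n m
  rw [hLHS, hRHS, hswap]
  linarith

lemma ortho00 {α : ℝ} (hα : 0 < α) :
    ∫ x, genHermite α 0 x * genHermite α 0 x = 1 := by
  have hπ : (0:ℝ) < Real.sqrt Real.pi := Real.sqrt_pos.2 Real.pi_pos
  have hrw : (fun x => genHermite α 0 x * genHermite α 0 x)
      = fun x => (cst α 0)^2 * Real.exp (-(α^2) * x^2) := by
    funext x
    simp only [gH_eq_pg, pg, Polynomial.eval_mul, Polynomial.eval_C]
    rw [show (Hp 0) = 1 from rfl]
    rw [show (-(α^2) * x^2 : ℝ) = (-(α^2*x^2)/2) + (-(α^2*x^2)/2) by ring, Real.exp_add]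
    simp; ring
  rw [hrw, MeasureTheory.integral_const_mul, integral_gaussian]
  have h1 : (cst α 0)^2 = α / Real.sqrt Real.pi := by
    rw [cst, Real.sq_sqrt (by positivity)]
    norm_num
  have h2 : Real.sqrt (Real.pi / α^2) = Real.sqrt Real.pi / α := by
    rw [eq_div_iff hα.ne', ← Real.sqrt_sq hα.le, ← Real.sqrt_mul (by positivity)]
    congr 1
    field_simp
    rw [Real.sq_sqrt (by positivity)]
  rw [h1, h2]
  field_simp

lemma ortho0succ {α : ℝ} (hα : 0 < α) (m : ℕ) :
    ∫ x, genHermite α 0 x * genHermite α (m+1) x = 0 := by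
  have h := ladder hα 0 m
  simp only [Nat.cast_zero, mul_zero, Real.sqrt_zero, zero_mul] at h
  have hpos : (0:ℝ) < α * Real.sqrt (2*((m:ℝ)+1)) := by positivity
  rcases mul_eq_zero.1 h with h' | h'
  · exact absurd h' hpos.ne'
  · exact h'

lemma psi_ortho {α : ℝ} (hα : 0 < α) :
    ∀ n m : ℕ, ∫ x, genHermite α n x * genHermite α m x = if n = m then 1 else 0 := by
  intro n
  induction n with
  | zero =>
    intro m
    cases m with
    | zero => simpa using ortho00 hα
    | succ m => simp [ortho0succ hα m]
  | succ n ih =>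
    intro m
    cases m with
    | zero =>
      have hsym : ∫ x, genHermite α (n+1) x * genHermite α 0 x
          = ∫ x, genHermite α 0 x * genHermite α (n+1) x :=
        integral_congr_ae (Filter.Eventually.of_forall fun x => mul_comm _ _)
      rw [hsym, ortho0succ hα n]
      simp
    | succ m =>
      have h := ladder hα (n+1) m
      simp only [Nat.add_sub_cancel] at h
      rw [ih m] at h
      push_cast at h
      by_cases hnm : n = m
      · subst hnm
        rw [if_pos rfl, mul_one] at h
        have hpos : (α * Real.sqrt (2*((n:ℝ)+1))) ≠ 0 := by positivity
        have h2 : α * Real.sqrt (2*((n:ℝ)+1))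
            * (∫ x, genHermite α (n+1) x * genHermite α (n+1) x)
            = α * Real.sqrt (2*((n:ℝ)+1)) * 1 := by rw [mul_one]; exact h
        have := mul_left_cancel₀ hpos h2
        simp [this]
      · simp only [if_neg hnm, mul_zero] at h
        have hpos : (0:ℝ) < α * Real.sqrt (2*((m:ℝ)+1)) := by positivity
        have hz : ∫ x, genHermite α (n+1) x * genHermite α (m+1) x = 0 := by
          rcases mul_eq_zero.1 h with h' | h'
          · exact absurd h' hpos.ne'
          · exact h'
        simp [hz, hnm]

/-! ### continuity and L² facts -/

lemma psi_cont {α : ℝ} (hα : 0 < α) (n : ℕ) : Continuous (genHermite α n) :=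
  continuous_iff_continuousAt.2 fun x => (gH_hasDerivAt hα n x).differentiableAt.continuousAt

lemma psi_memL2 {α : ℝ} (hα : 0 < α) (n : ℕ) :
    MemLp (genHermite α n) 2 (volume : Measure ℝ) := by
  refine (memLp_two_iff_integrable_sq (psi_cont hα n).aestronglyMeasurable).2 ?_
  simpa [pow_two] using psi_int hα n n

lemma L2_mul_integrable {u w : ℝ → ℝ} (hu : MemLp u 2 (volume : Measure ℝ))
    (hw : MemLp w 2 (volume : Measure ℝ)) : Integrable (fun x => u x * w x) volume := by
  have m := hu.aestronglyMeasurable.mul hw.aestronglyMeasurable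
  have h1 := hu.integrable_sq
  have h2 := hw.integrable_sq
  refine Integrable.mono' (((h1.add h2).const_mul (1/2))) m
    (Filter.Eventually.of_forall fun x => ?_)
  rw [Real.norm_eq_abs, abs_mul]
  simp only [Pi.add_apply]
  nlinarith [sq_nonneg (|u x| - |w x|), sq_abs (u x), sq_abs (w x), abs_nonneg (u x),
    abs_nonneg (w x)]

/-! ### dot products -/

lemma dot {α : ℝ} (hα : 0 < α) (s t : Finset ℕ) (a b : ℕ → ℝ) :
    ∫ x, (∑ k ∈ s, a k * genHermite α k x) * (∑ j ∈ t, b j * genHermite α j x)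
      = ∑ k ∈ s, (if k ∈ t then a k * b k else 0) := by
  have h1 : ∀ x : ℝ, (∑ k ∈ s, a k * genHermite α k x) * (∑ j ∈ t, b j * genHermite α j x)
      = ∑ k ∈ s, ∑ j ∈ t, (a k * b j) * (genHermite α k x * genHermite α j x) := by
    intro x
    rw [Finset.sum_mul_sum]
    refine Finset.sum_congr rfl fun k _ => Finset.sum_congr rfl fun j _ => by ring
  rw [integral_congr_ae (Filter.Eventually.of_forall h1)]
  rw [integral_finset_sum s (fun k _ => integrable_finset_sum t
    (fun j _ => (psi_int hα k j).const_mul _))]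
  refine Finset.sum_congr rfl fun k _ => ?_
  rw [integral_finset_sum t (fun j _ => (psi_int hα k j).const_mul _)]
  have : ∀ j ∈ t, ∫ x, (a k * b j) * (genHermite α k x * genHermite α j x)
      = (a k * b j) * (if k = j then 1 else 0) := by
    intro j _
    rw [MeasureTheory.integral_const_mul, psi_ortho hα k j]
  rw [Finset.sum_congr rfl this]
  simp_rw [mul_ite, mul_one, mul_zero, Finset.sum_ite_eq]

lemma sum_gH_hasDerivAt {α : ℝ} (hα : 0 < α) (s : Finset ℕ) (c : ℕ → ℝ) (x : ℝ) :
    HasDerivAt (fun z => ∑ n ∈ s, c n * genHermite α n z) (∑ n ∈ s, c n * gHd α n x) x :=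
  HasDerivAt.fun_sum (fun n _ => ((gH_hasDerivAt hα n x).const_mul (c n)))

lemma sum_gH_eq_pg (α : ℝ) (s : Finset ℕ) (a : ℕ → ℝ) :
    (fun x => ∑ k ∈ s, a k * genHermite α k x)
      = pg α (∑ k ∈ s, Polynomial.C (a k * cst α k) * Hp k) := by
  funext x
  rw [pg, Polynomial.eval_finset_sum, Finset.sum_mul]
  refine Finset.sum_congr rfl fun k _ => ?_
  rw [gH_eq_pg, pg]
  simp only [Polynomial.eval_mul, Polynomial.eval_C]
  ring

/-! ### SLop on pg -/

lemma SLop_pg (α : ℝ) (q : Polynomial ℝ) (x : ℝ) :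
    SLop α (pg α q) x
      = α^2 * pg α (2 * Polynomial.X * Polynomial.derivative q
          - Polynomial.derivative (Polynomial.derivative q)) x := by
  have hin : (fun z => Real.exp (α ^ 2 * z ^ 2 / 2) * pg α q z)
      = fun z => Polynomial.eval (α*z) q := by
    funext z
    rw [pg, show Real.exp (α^2*z^2/2) * (Polynomial.eval (α*z) q * Real.exp (-(α^2*z^2)/2))
      = Polynomial.eval (α*z) q * (Real.exp (α^2*z^2/2) * Real.exp (-(α^2*z^2)/2)) by ring,
      ← Real.exp_add, show α^2*z^2/2 + -(α^2*z^2)/2 = 0 by ring, Real.exp_zero, mul_one]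
  have hd : ∀ y : ℝ, deriv (fun z => Polynomial.eval (α*z) q) y
      = α * Polynomial.eval (α*y) (Polynomial.derivative q) := by
    intro y
    have h1 : HasDerivAt (fun z : ℝ => Polynomial.eval (α*z) q)
        (Polynomial.eval (α*y) (Polynomial.derivative q) * (α*1)) y :=
      HasDerivAt.comp y (Polynomial.hasDerivAt q (α*y)) ((hasDerivAt_id y).const_mul α)
    rw [h1.deriv]; ring
  rw [SLop, hin]
  simp only [hd]
  have hmid : HasDerivAt (fun y : ℝ => Real.exp (-(α^2*y^2))
      * (α * Polynomial.eval (α*y) (Polynomial.derivative q)))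
      (Real.exp (-(α^2*x^2)) * (-(α^2*((2:ℕ)*x^1)))
          * (α * Polynomial.eval (α*x) (Polynomial.derivative q))
        + Real.exp (-(α^2*x^2)) * (α * (Polynomial.eval (α*x)
            (Polynomial.derivative (Polynomial.derivative q)) * (α*1)))) x := by
    have h2a := HasDerivAt.comp x (Polynomial.hasDerivAt (Polynomial.derivative q) (α*x))
      ((hasDerivAt_id x).const_mul α)
    have h2 : HasDerivAt (fun y : ℝ => α * Polynomial.eval (α*y) (Polynomial.derivative q))
        (α * (Polynomial.eval (α*x) (Polynomial.derivative (Polynomial.derivative q)) * (α*1)))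
        x := by
      simpa [Function.comp] using h2a.const_mul α
    exact HasDerivAt.mul ((((hasDerivAt_pow 2 x).const_mul (α^2)).neg).exp) h2
  rw [hmid.deriv]
  have hAB : Real.exp (α^2*x^2/2) * Real.exp (-(α^2*x^2)) = Real.exp (-(α^2*x^2)/2) := by
    rw [← Real.exp_add]; congr 1; ring
  simp only [pg, Polynomial.eval_sub, Polynomial.eval_mul, Polynomial.eval_X,
    Polynomial.eval_ofNat]
  push_cast
  linear_combination (-(α^2 * Polynomial.eval (α*x) (Polynomial.derivative (Polynomial.derivative q)))
    + 2*α^3*x*Polynomial.eval (α*x) (Polynomial.derivative q)) * hAB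

lemma SLop_sum {α : ℝ} (hα : 0 < α) (s : Finset ℕ) (a : ℕ → ℝ) (x : ℝ) :
    SLop α (fun x => ∑ k ∈ s, a k * genHermite α k x) x
      = ∑ k ∈ s, (2*(k:ℝ)*α^2 * a k) * genHermite α k x := by
  rw [sum_gH_eq_pg α s a, SLop_pg]
  have hpoly : 2 * Polynomial.X * Polynomial.derivative (∑ k ∈ s, Polynomial.C (a k * cst α k) * Hp k)
      - Polynomial.derivative (Polynomial.derivative (∑ k ∈ s, Polynomial.C (a k * cst α k) * Hp k))
      = ∑ k ∈ s, Polynomial.C (a k * cst α k) * (Polynomial.C ((2:ℝ)*k) * Hp k) := by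
    rw [map_sum, map_sum]
    rw [Finset.mul_sum, ← Finset.sum_sub_distrib]
    refine Finset.sum_congr rfl fun k _ => ?_
    have hck : Polynomial.derivative (Polynomial.C (a k * cst α k) * Hp k)
        = Polynomial.C (a k * cst α k) * Polynomial.derivative (Hp k) := by
      rw [Polynomial.derivative_mul, Polynomial.derivative_C]; ring
    rw [hck, Polynomial.derivative_mul, Polynomial.derivative_C]
    have := Hp_sl k
    linear_combination (Polynomial.C (a k * cst α k)) * this
  rw [hpoly]
  have : pg α (∑ k ∈ s, Polynomial.C (a k * cst α k) * (Polynomial.C ((2:ℝ)*k) * Hp k)) x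
      = ∑ k ∈ s, (a k * (2*(k:ℝ))) * (pg α (Polynomial.C (cst α k) * Hp k) x) := by
    rw [pg, Polynomial.eval_finset_sum, Finset.sum_mul]
    refine Finset.sum_congr rfl fun k _ => ?_
    simp only [pg, Polynomial.eval_mul, Polynomial.eval_C]
    ring
  rw [this, Finset.mul_sum]
  refine Finset.sum_congr rfl fun k _ => ?_
  rw [← gH_eq_pg]
  ring

/-! ### boundedness of continuous functions with limits -/

lemma bdd_of_tendsto {g : ℝ → ℝ} (hc : Continuous g) {L1 L2 : ℝ}
    (h1 : Tendsto g atTop (𝓝 L1)) (h2 : Tendsto g atBot (𝓝 L2)) :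
    ∃ C, ∀ x, ‖g x‖ ≤ C := by
  have e1 : ∀ᶠ x in atTop, dist (g x) L1 < 1 := (Metric.tendsto_nhds.1 h1) 1 one_pos
  have e2 : ∀ᶠ x in atBot, dist (g x) L2 < 1 := (Metric.tendsto_nhds.1 h2) 1 one_pos
  obtain ⟨A, hA⟩ := eventually_atTop.1 e1
  obtain ⟨B, hB⟩ := eventually_atBot.1 e2
  obtain ⟨C, hC⟩ := (isCompact_Icc (a := min B A) (b := max B A)).exists_bound_of_continuousOn
    hc.continuousOn
  refine ⟨max C (max (|L1|+1) (|L2|+1)), fun x => ?_⟩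
  rcases le_total x (max B A) with hx1 | hx1
  · rcases le_total (min B A) x with hx2 | hx2
    · exact le_trans (hC x ⟨hx2, hx1⟩) (le_max_left _ _)
    · have hxB : x ≤ B := le_trans hx2 (min_le_left _ _)
      have := hB x hxB
      rw [Real.dist_eq] at this
      have : |g x| ≤ |L2| + 1 := by
        have := abs_sub_abs_le_abs_sub (g x) L2
        linarith
      rw [Real.norm_eq_abs]
      exact le_trans this (le_trans (le_max_right _ _) (le_max_right _ _))
  · have hxA : A ≤ x := le_trans (le_max_right _ _) hx1
    have := hA x hxA
    rw [Real.dist_eq] at this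
    have : |g x| ≤ |L1| + 1 := by
      have := abs_sub_abs_le_abs_sub (g x) L1
      linarith
    rw [Real.norm_eq_abs]
    exact le_trans this (le_trans (le_max_left _ _) (le_max_right _ _))

lemma juggle (N : ℕ) (w c s : ℕ → ℝ) (hs0 : s 0 = 0) :
    (∑ j ∈ Finset.range (N+1), ∑ n ∈ Finset.range (N+2),
        w n * c j * (s n * (if n-1 = j then (1:ℝ) else 0)
          - s (n+1) * (if n+1 = j then (1:ℝ) else 0)))
      = - ∑ j ∈ Finset.range (N+1), c j * (s j * w (j-1) - s (j+1) * w (j+1)) := by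
  rw [← Finset.sum_neg_distrib]
  refine Finset.sum_congr rfl fun j hj => ?_
  have hj' : j < N+1 := Finset.mem_range.1 hj
  have split : ∀ n, w n * c j * (s n * (if n-1 = j then (1:ℝ) else 0)
        - s (n+1) * (if n+1 = j then (1:ℝ) else 0))
      = (if n = j+1 then w n * c j * s n else 0)
        - (if n + 1 = j then w n * c j * s (n+1) else 0) := by
    intro n
    cases n with
    | zero =>
      have h1 : ¬ (0 = j + 1) := by omega
      simp only [Nat.zero_sub, if_neg h1, hs0]
      by_cases h2 : 0 = j <;> by_cases h3 : 0 + 1 = j <;>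
        simp [h2, h3] <;> ring
    | succ m =>
      have h6 : (m + 1 = j + 1) ↔ (m = j) := by omega
      simp only [Nat.add_sub_cancel, h6]
      by_cases h2 : m = j
      · simp [h2]
        split_ifs with hcase
        · exact absurd hcase (by omega)
        · ring
      · by_cases h5 : m + 1 + 1 = j
        · simp [h2, h5]
          try ring
        · simp [h2, h5]
          try ring
  rw [Finset.sum_congr rfl (fun n _ => split n), Finset.sum_sub_distrib]
  rw [Finset.sum_ite_eq' (Finset.range (N+2)) (j+1) (fun n => w n * c j * s n),
    if_pos (Finset.mem_range.2 (by omega))]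
  cases j with
  | zero =>
    have : ∀ n ∈ Finset.range (N+2), (if n + 1 = 0 then w n * c 0 * s (n+1) else 0) = 0 := by
      intro n _; rw [if_neg (Nat.succ_ne_zero n)]
    rw [Finset.sum_congr rfl this, Finset.sum_const_zero]
    simp [hs0]; ring
  | succ m =>
    have : ∀ n, (if n + 1 = m + 1 then w n * c (m+1) * s (n+1) else 0)
        = (if n = m then w n * c (m+1) * s (n+1) else 0) := by
      intro n
      congr 1
      exact propext ⟨fun h => by omega, fun h => by omega⟩
    rw [Finset.sum_congr rfl (fun n _ => this n),
      Finset.sum_ite_eq' (Finset.range (N+2)) m (fun n => w n * c (m+1) * s (n+1)),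
      if_pos (Finset.mem_range.2 (by omega))]
    simp only [Nat.add_sub_cancel]
    ring

lemma gHd_eq {α : ℝ} (n : ℕ) :
    gHd α n = fun x => (α * Real.sqrt ((n:ℝ)/2)) * genHermite α (n-1) x
      - (α * Real.sqrt (((n:ℝ)+1)/2)) * genHermite α (n+1) x := rfl

lemma s_succ (α : ℝ) (n : ℕ) :
    α * Real.sqrt ((↑(n+1):ℝ)/2) = α * Real.sqrt (((n:ℝ)+1)/2) := by push_cast; ring_nf

lemma int_gHd_psi {α : ℝ} (hα : 0 < α) (n j : ℕ) :
    ∫ x, gHd α n x * genHermite α j x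
      = (α * Real.sqrt ((n:ℝ)/2)) * (if n-1 = j then (1:ℝ) else 0)
        - (α * Real.sqrt ((↑(n+1):ℝ)/2)) * (if n+1 = j then (1:ℝ) else 0) := by
  have i1 : Integrable fun x => (α * Real.sqrt ((n:ℝ)/2))
      * (genHermite α (n-1) x * genHermite α j x) := (psi_int hα (n-1) j).const_mul _
  have i2 : Integrable fun x => (α * Real.sqrt (((n:ℝ)+1)/2))
      * (genHermite α (n+1) x * genHermite α j x) := (psi_int hα (n+1) j).const_mul _
  have h1 : (fun x => gHd α n x * genHermite α j x)
      = fun x => (α * Real.sqrt ((n:ℝ)/2)) * (genHermite α (n-1) x * genHermite α j x)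
        - (α * Real.sqrt (((n:ℝ)+1)/2)) * (genHermite α (n+1) x * genHermite α j x) := by
    funext x; simp only [gHd]; ring
  rw [h1, integral_sub i1 i2, MeasureTheory.integral_const_mul,
    MeasureTheory.integral_const_mul, psi_ortho hα, psi_ortho hα, s_succ]

/-- The flux term vanishes when tested against `v` itself. -/
lemma flux_zero {α : ℝ} (hα : 0 < α) (N : ℕ) (c : ℕ → ℝ) (f F : ℝ → ℝ)
    (hf : ContDiff ℝ 1 f) (hf0 : f 0 = 0)
    (hF : ∀ y : ℝ, HasDerivAt F (y * deriv f y) y) :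
    (∫ x : ℝ, deriv (fun z => ∑ n ∈ Finset.range (N + 2),
          (∫ y : ℝ, f (∑ k ∈ Finset.range (N + 1), c k * genHermite α k y)
            * genHermite α n y) * genHermite α n z) x *
        (∑ j ∈ Finset.range (N + 1), c j * genHermite α j x)) = 0 := by
  set u : ℝ → ℝ := fun y => ∑ k ∈ Finset.range (N+1), c k * genHermite α k y with hu_def
  set w : ℕ → ℝ := fun n => ∫ y, f (u y) * genHermite α n y with hw_def
  set s : ℕ → ℝ := fun n => α * Real.sqrt ((n:ℝ)/2) with hs_def
  have hs0 : s 0 = 0 := by simp [hs_def]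
  -- basic analytic facts about u
  have hu_cont : Continuous u := continuous_finset_sum _
    (fun k _ => continuous_const.mul (psi_cont hα k))
  have hu_top : Tendsto u atTop (𝓝 0) := by
    rw [hu_def, sum_gH_eq_pg]; exact pg_tendsto_atTop hα _
  have hu_bot : Tendsto u atBot (𝓝 0) := by
    rw [hu_def, sum_gH_eq_pg]; exact pg_tendsto_atBot hα _
  have hfc : Continuous f := hf.continuous
  have hfu_top : Tendsto (fun x => f (u x)) atTop (𝓝 0) := by
    have := (hfc.tendsto 0).comp hu_top
    rwa [hf0] at this
  have hfu_bot : Tendsto (fun x => f (u x)) atBot (𝓝 0) := by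
    have := (hfc.tendsto 0).comp hu_bot
    rwa [hf0] at this
  obtain ⟨C, hC⟩ := bdd_of_tendsto (hfc.comp hu_cont) hfu_top hfu_bot
  have hmeas : AEStronglyMeasurable (fun x => f (u x)) volume :=
    (hfc.comp hu_cont).aestronglyMeasurable
  have int_fpsi : ∀ m, Integrable fun x => f (u x) * genHermite α m x :=
    fun m => (psi_integrable hα m).bdd_mul hmeas (Filter.Eventually.of_forall hC)
  have int_fgHd : ∀ m, Integrable fun x => f (u x) * gHd α m x := by
    intro m
    have i1 := (int_fpsi (m-1)).const_mul (α * Real.sqrt ((m:ℝ)/2))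
    have i2 := (int_fpsi (m+1)).const_mul (α * Real.sqrt (((m:ℝ)+1)/2))
    refine (i1.sub i2).congr (Filter.Eventually.of_forall fun x => ?_)
    simp only [Pi.sub_apply, gHd]; ring
  -- Step A: rewrite the deriv of the projected flux
  have hderiv : ∀ x : ℝ, deriv (fun z => ∑ n ∈ Finset.range (N + 2),
        w n * genHermite α n z) x = ∑ n ∈ Finset.range (N+2), w n * gHd α n x :=
    fun x => (sum_gH_hasDerivAt hα _ w x).deriv
  -- Step B: compute the flux integral as a double sum
  have int_gHd_psi_mul : ∀ n j, Integrable fun x =>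
      (w n * c j) * (gHd α n x * genHermite α j x) := by
    intro n j
    have i1 := (psi_int hα (n-1) j).const_mul ((w n * c j) * (α * Real.sqrt ((n:ℝ)/2)))
    have i2 := (psi_int hα (n+1) j).const_mul ((w n * c j) * (α * Real.sqrt (((n:ℝ)+1)/2)))
    refine (i1.sub i2).congr (Filter.Eventually.of_forall fun x => ?_)
    simp only [Pi.sub_apply, gHd]; ring
  have hflux : (∫ x : ℝ, (∑ n ∈ Finset.range (N+2), w n * gHd α n x)
        * (∑ j ∈ Finset.range (N + 1), c j * genHermite α j x))
      = ∑ j ∈ Finset.range (N+1), ∑ n ∈ Finset.range (N+2),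
          w n * c j * (s n * (if n-1 = j then (1:ℝ) else 0)
            - s (n+1) * (if n+1 = j then (1:ℝ) else 0)) := by
    have hexp : ∀ x : ℝ, (∑ n ∈ Finset.range (N+2), w n * gHd α n x)
        * (∑ j ∈ Finset.range (N + 1), c j * genHermite α j x)
        = ∑ j ∈ Finset.range (N+1), ∑ n ∈ Finset.range (N+2),
            (w n * c j) * (gHd α n x * genHermite α j x) := by
      intro x
      rw [Finset.sum_mul_sum, Finset.sum_comm]
      exact Finset.sum_congr rfl fun j _ => Finset.sum_congr rfl fun n _ => by ring
    rw [integral_congr_ae (Filter.Eventually.of_forall hexp)]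
    rw [integral_finset_sum _ (fun j _ => integrable_finset_sum _
      (fun n _ => int_gHd_psi_mul n j))]
    refine Finset.sum_congr rfl fun j _ => ?_
    rw [integral_finset_sum _ (fun n _ => int_gHd_psi_mul n j)]
    refine Finset.sum_congr rfl fun n _ => ?_
    rw [MeasureTheory.integral_const_mul, int_gHd_psi hα n j]
  -- Step D: the W-identity
  have hW : (∫ x, f (u x) * (∑ j ∈ Finset.range (N+1), c j * gHd α j x))
      = ∑ j ∈ Finset.range (N+1), c j * (s j * w (j-1) - s (j+1) * w (j+1)) := by
    have hexp : ∀ x : ℝ, f (u x) * (∑ j ∈ Finset.range (N+1), c j * gHd α j x)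
        = ∑ j ∈ Finset.range (N+1), c j * (f (u x) * gHd α j x) := by
      intro x
      rw [Finset.mul_sum]
      exact Finset.sum_congr rfl fun j _ => by ring
    rw [integral_congr_ae (Filter.Eventually.of_forall hexp)]
    rw [integral_finset_sum _ (fun j _ => (int_fgHd j).const_mul _)]
    refine Finset.sum_congr rfl fun j _ => ?_
    rw [MeasureTheory.integral_const_mul]
    have h1 : (fun x => f (u x) * gHd α j x)
        = fun x => (α * Real.sqrt ((j:ℝ)/2)) * (f (u x) * genHermite α (j-1) x)
          - (α * Real.sqrt (((j:ℝ)+1)/2)) * (f (u x) * genHermite α (j+1) x) := by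
      funext x; simp only [gHd]; ring
    have h2 : (∫ x, f (u x) * gHd α j x)
        = α * Real.sqrt ((j:ℝ)/2) * (∫ x, f (u x) * genHermite α (j-1) x)
          - α * Real.sqrt (((j:ℝ)+1)/2) * (∫ x, f (u x) * genHermite α (j+1) x) := by
      rw [h1, integral_sub ((int_fpsi (j-1)).const_mul _) ((int_fpsi (j+1)).const_mul _),
        MeasureTheory.integral_const_mul, MeasureTheory.integral_const_mul]
    rw [h2]
    simp only [hs_def, hw_def]
    try push_cast
    try ring
  -- Step E: the W-integral vanishes by the FTC
  have hWzero : (∫ x, f (u x) * (∑ j ∈ Finset.range (N+1), c j * gHd α j x)) = 0 := by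
    have hFd : Differentiable ℝ F := fun x => (hF x).differentiableAt
    have hFc : Continuous F := hFd.continuous
    have hG : ∀ x : ℝ, HasDerivAt (fun x => u x * f (u x) - F (u x))
        (f (u x) * (∑ j ∈ Finset.range (N+1), c j * gHd α j x)) x := by
      intro x
      have hu : HasDerivAt u (∑ j ∈ Finset.range (N+1), c j * gHd α j x) x :=
        sum_gH_hasDerivAt hα _ c x
      have hf_at : HasDerivAt f (deriv f (u x)) (u x) :=
        ((hf.differentiable one_ne_zero) (u x)).hasDerivAt
      have h1 : HasDerivAt (fun x => f (u x))
          (deriv f (u x) * (∑ j ∈ Finset.range (N+1), c j * gHd α j x)) x :=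
        hf_at.comp x hu
      have h2 := hu.fun_mul h1
      have h3 : HasDerivAt (fun x => F (u x))
          ((u x * deriv f (u x)) * (∑ j ∈ Finset.range (N+1), c j * gHd α j x)) x :=
        (hF (u x)).comp x hu
      have h4 := h2.fun_sub h3
      refine h4.congr_deriv ?_
      ring
    have hint : Integrable (fun x => f (u x) * (∑ j ∈ Finset.range (N+1), c j * gHd α j x)) := by
      have : ∀ x : ℝ, f (u x) * (∑ j ∈ Finset.range (N+1), c j * gHd α j x)
          = ∑ j ∈ Finset.range (N+1), c j * (f (u x) * gHd α j x) := by
        intro x; rw [Finset.mul_sum]; exact Finset.sum_congr rfl fun j _ => by ring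
      refine (integrable_finset_sum _ (fun j _ => (int_fgHd j).const_mul (c j))).congr
        (Filter.Eventually.of_forall fun x => (this x).symm)
    have htop : Tendsto (fun x => u x * f (u x) - F (u x)) atTop (𝓝 (-(F 0))) := by
      have h5 := (hu_top.mul hfu_top).sub ((hFc.tendsto 0).comp hu_top)
      simpa using h5
    have hbot : Tendsto (fun x => u x * f (u x) - F (u x)) atBot (𝓝 (-(F 0))) := by
      have h5 := (hu_bot.mul hfu_bot).sub ((hFc.tendsto 0).comp hu_bot)
      simpa using h5
    exact integral_deriv_eq_zero _ _ hG hint htop hbot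
  -- assemble
  have hd2 : (fun x : ℝ => deriv (fun z => ∑ n ∈ Finset.range (N + 2),
        w n * genHermite α n z) x * (∑ j ∈ Finset.range (N + 1), c j * genHermite α j x))
      = fun x => (∑ n ∈ Finset.range (N+2), w n * gHd α n x)
        * (∑ j ∈ Finset.range (N + 1), c j * genHermite α j x) := by
    funext x; rw [hderiv x]
  calc (∫ x : ℝ, deriv (fun z => ∑ n ∈ Finset.range (N + 2),
          w n * genHermite α n z) x * (∑ j ∈ Finset.range (N + 1), c j * genHermite α j x))
      = ∫ x : ℝ, (∑ n ∈ Finset.range (N+2), w n * gHd α n x)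
          * (∑ j ∈ Finset.range (N + 1), c j * genHermite α j x) := by rw [hd2]
    _ = ∑ j ∈ Finset.range (N+1), ∑ n ∈ Finset.range (N+2),
          w n * c j * (s n * (if n-1 = j then (1:ℝ) else 0)
            - s (n+1) * (if n+1 = j then (1:ℝ) else 0)) := hflux
    _ = - ∑ j ∈ Finset.range (N+1), c j * (s j * w (j-1) - s (j+1) * w (j+1)) :=
          juggle N w c s hs0
    _ = 0 := by rw [← hW, hWzero, neg_zero]

/-- extract a coefficient by testing against a single Hermite function -/
lemma coef_eq {α : ℝ} (hα : 0 < α) (s : Finset ℕ) (a : ℕ → ℝ) {j : ℕ} (hj : j ∈ s) :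
    ∫ x, (∑ k ∈ s, a k * genHermite α k x) * genHermite α j x = a j := by
  have h1 : ∀ x : ℝ, genHermite α j x = ∑ i ∈ ({j} : Finset ℕ), (1:ℝ) * genHermite α i x := by
    intro x; rw [Finset.sum_singleton, one_mul]
  have h2 : (∫ x, (∑ k ∈ s, a k * genHermite α k x) * genHermite α j x)
      = ∫ x, (∑ k ∈ s, a k * genHermite α k x)
          * (∑ i ∈ ({j} : Finset ℕ), (1:ℝ) * genHermite α i x) := by
    congr 1
    funext x
    rw [Finset.sum_singleton, one_mul]
  rw [h2, dot hα]
  have h3 : ∀ k ∈ s, (if k ∈ ({j} : Finset ℕ) then a k * 1 else 0)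
      = if k = j then a k else 0 := by
    intro k _
    simp [Finset.mem_singleton]
  rw [Finset.sum_congr rfl h3, Finset.sum_ite_eq' s j a, if_pos hj]

/-- energy estimate for the Hermite spectral viscosity scheme with
viscosity term `ε L_α v`: if `v(t) = Σ_{k=0}^N v̂_k(t) H_k^α` solves the scheme weakly
against every `φ ∈ R_N` on `[0,T]` with initial datum `P_N u₀`, then
`‖v(T)‖² + 2ε ∫₀ᵀ ‖D_x v(t)‖² dt ≤ ‖P_N u₀‖² ≤ ‖u₀‖²`. -/
theorem energy_estimate_L (α T ε : ℝ) (hα : 0 < α) (hT : 0 < T) (hε : 0 < ε) (N : ℕ)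
    (f : ℝ → ℝ) (hf : ContDiff ℝ 1 f) (hf0 : f 0 = 0)
    (F : ℝ → ℝ) (hF : ∀ y : ℝ, HasDerivAt F (y * deriv f y) y)
    (u₀ : ℝ → ℝ) (hu₀ : MemLp u₀ 2 (volume : Measure ℝ))
    (vh vh' : ℕ → ℝ → ℝ)
    (hvh : ∀ k ≤ N, ∀ t ∈ Set.Icc (0 : ℝ) T, HasDerivAt (vh k) (vh' k t) t)
    (v : ℝ → ℝ → ℝ)
    (hv : v = fun t x => ∑ k ∈ Finset.range (N + 1), vh k t * genHermite α k x)
    (hinit : ∀ x : ℝ, v 0 x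
      = ∑ n ∈ Finset.range (N + 1), (∫ y : ℝ, u₀ y * genHermite α n y) * genHermite α n x)
    (hscheme : ∀ t ∈ Set.Icc (0 : ℝ) T, ∀ c : ℕ → ℝ,
      (∫ x : ℝ, (∑ k ∈ Finset.range (N + 1), vh' k t * genHermite α k x) *
          (∑ j ∈ Finset.range (N + 1), c j * genHermite α j x))
        + (∫ x : ℝ, deriv (fun z => ∑ n ∈ Finset.range (N + 2),
              (∫ y : ℝ, f (v t y) * genHermite α n y) * genHermite α n z) x *
            (∑ j ∈ Finset.range (N + 1), c j * genHermite α j x))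
        + ε * (∫ x : ℝ, SLop α (v t) x *
            (∑ j ∈ Finset.range (N + 1), c j * genHermite α j x)) = 0) :
    (∫ x : ℝ, (v T x) ^ 2)
          + 2 * ε * ∫ t in (0 : ℝ)..T, ∫ x : ℝ, (Dx α (v t) x) ^ 2
        ≤ ∫ x : ℝ, (∑ n ∈ Finset.range (N + 1),
            (∫ y : ℝ, u₀ y * genHermite α n y) * genHermite α n x) ^ 2
      ∧ (∫ x : ℝ, (∑ n ∈ Finset.range (N + 1),
            (∫ y : ℝ, u₀ y * genHermite α n y) * genHermite α n x) ^ 2)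
        ≤ ∫ x : ℝ, (u₀ x) ^ 2 := by
  -- notation
  set ψ : ℕ → ℝ → ℝ := genHermite α with hψ
  set uh : ℕ → ℝ := fun n => ∫ y, u₀ y * ψ n y with huh
  -- Bessel part
  have hint_u0psi : ∀ n : ℕ, Integrable (fun y => u₀ y * ψ n y) volume :=
    fun n => L2_mul_integrable hu₀ (psi_memL2 hα n)
  have hpp : (∫ x, (∑ n ∈ Finset.range (N+1), uh n * ψ n x)
        * (∑ n ∈ Finset.range (N+1), uh n * ψ n x)) = ∑ n ∈ Finset.range (N+1), (uh n)^2 := by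
    rw [dot hα]
    exact Finset.sum_congr rfl fun k hk => by rw [if_pos hk, pow_two]
  have ipp : Integrable (fun x => (∑ n ∈ Finset.range (N+1), uh n * ψ n x)
      * (∑ n ∈ Finset.range (N+1), uh n * ψ n x)) volume := by
    have h1 : ∀ x : ℝ, (∑ n ∈ Finset.range (N+1), uh n * ψ n x)
        * (∑ n ∈ Finset.range (N+1), uh n * ψ n x)
        = ∑ n ∈ Finset.range (N+1), ∑ m ∈ Finset.range (N+1),
            (uh n * uh m) * (ψ n x * ψ m x) := by
      intro x
      rw [Finset.sum_mul_sum]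
      exact Finset.sum_congr rfl fun n _ => Finset.sum_congr rfl fun m _ => by ring
    refine (integrable_finset_sum _ (fun n _ => integrable_finset_sum _
      (fun m _ => (psi_int hα n m).const_mul _))).congr
      (Filter.Eventually.of_forall fun x => (h1 x).symm)
  have iup : Integrable (fun x => u₀ x * (∑ n ∈ Finset.range (N+1), uh n * ψ n x)) volume := by
    have h1 : ∀ x : ℝ, u₀ x * (∑ n ∈ Finset.range (N+1), uh n * ψ n x)
        = ∑ n ∈ Finset.range (N+1), uh n * (u₀ x * ψ n x) := by
      intro x; rw [Finset.mul_sum]; exact Finset.sum_congr rfl fun n _ => by ring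
    refine (integrable_finset_sum _ (fun n _ => (hint_u0psi n).const_mul _)).congr
      (Filter.Eventually.of_forall fun x => (h1 x).symm)
  have hup : (∫ x, u₀ x * (∑ n ∈ Finset.range (N+1), uh n * ψ n x))
      = ∑ n ∈ Finset.range (N+1), (uh n)^2 := by
    have h1 : ∀ x : ℝ, u₀ x * (∑ n ∈ Finset.range (N+1), uh n * ψ n x)
        = ∑ n ∈ Finset.range (N+1), uh n * (u₀ x * ψ n x) := by
      intro x; rw [Finset.mul_sum]; exact Finset.sum_congr rfl fun n _ => by ring
    rw [integral_congr_ae (Filter.Eventually.of_forall h1),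
      integral_finset_sum _ (fun n _ => (hint_u0psi n).const_mul _)]
    refine Finset.sum_congr rfl fun n _ => ?_
    rw [MeasureTheory.integral_const_mul, pow_two]
  have iu2 : Integrable (fun x => (u₀ x)^2) volume := hu₀.integrable_sq
  have hbessel : (∑ n ∈ Finset.range (N+1), (uh n)^2) ≤ ∫ x, (u₀ x)^2 := by
    have h0 : (0:ℝ) ≤ ∫ x, (u₀ x - ∑ n ∈ Finset.range (N+1), uh n * ψ n x)^2 :=
      integral_nonneg fun x => sq_nonneg _
    have hexpand : (∫ x, (u₀ x - ∑ n ∈ Finset.range (N+1), uh n * ψ n x)^2)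
        = (∫ x, (u₀ x)^2)
          - 2 * (∫ x, u₀ x * (∑ n ∈ Finset.range (N+1), uh n * ψ n x))
          + ∫ x, (∑ n ∈ Finset.range (N+1), uh n * ψ n x)
              * (∑ n ∈ Finset.range (N+1), uh n * ψ n x) := by
      have h1 : ∀ x : ℝ, (u₀ x - ∑ n ∈ Finset.range (N+1), uh n * ψ n x)^2
          = (u₀ x)^2 - 2 * (u₀ x * (∑ n ∈ Finset.range (N+1), uh n * ψ n x))
            + (∑ n ∈ Finset.range (N+1), uh n * ψ n x)
              * (∑ n ∈ Finset.range (N+1), uh n * ψ n x) := by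
        intro x; ring
      rw [integral_congr_ae (Filter.Eventually.of_forall h1)]
      have iup2 : Integrable (fun x => 2 * (u₀ x * ∑ n ∈ Finset.range (N+1), uh n * ψ n x))
          volume := iup.const_mul 2
      have isub : Integrable (fun x => u₀ x ^ 2
          - 2 * (u₀ x * ∑ n ∈ Finset.range (N+1), uh n * ψ n x)) volume := iu2.sub iup2
      rw [integral_add isub ipp, integral_sub iu2 iup2, MeasureTheory.integral_const_mul]
    rw [hexpand, hpp, hup] at h0
    linarith
  -- the scheme part
  subst hv
  set D : ℝ → ℝ := fun t => ∑ k ∈ Finset.range (N+1), (2*(k:ℝ)*α^2) * (vh k t)^2 with hD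
  set E : ℝ → ℝ := fun t => ∑ k ∈ Finset.range (N+1), (vh k t)^2 with hE
  -- scheme terms
  have hmass : ∀ t : ℝ, (∫ x : ℝ, (∑ k ∈ Finset.range (N + 1), vh' k t * ψ k x) *
      (∑ j ∈ Finset.range (N + 1), vh j t * ψ j x))
      = ∑ k ∈ Finset.range (N+1), vh' k t * vh k t := by
    intro t
    rw [dot hα]
    exact Finset.sum_congr rfl fun k hk => by rw [if_pos hk]
  have hslop : ∀ t : ℝ, (∫ x : ℝ, SLop α (fun x => ∑ k ∈ Finset.range (N + 1),
        vh k t * ψ k x) x * (∑ j ∈ Finset.range (N + 1), vh j t * ψ j x))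
      = D t := by
    intro t
    have h1 : ∀ x : ℝ, SLop α (fun x => ∑ k ∈ Finset.range (N + 1), vh k t * ψ k x) x
        * (∑ j ∈ Finset.range (N + 1), vh j t * ψ j x)
        = (∑ k ∈ Finset.range (N+1), (2*(k:ℝ)*α^2 * vh k t) * ψ k x)
          * (∑ j ∈ Finset.range (N + 1), vh j t * ψ j x) := by
      intro x
      rw [SLop_sum hα]
    rw [integral_congr_ae (Filter.Eventually.of_forall h1), dot hα]
    simp only [hD]
    refine Finset.sum_congr rfl fun k hk => ?_
    rw [if_pos hk]
    ring
  have hflux : ∀ t : ℝ, (∫ x : ℝ, deriv (fun z => ∑ n ∈ Finset.range (N + 2),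
        (∫ y : ℝ, f (∑ k ∈ Finset.range (N + 1), vh k t * ψ k y) * ψ n y) * ψ n z) x *
        (∑ j ∈ Finset.range (N + 1), vh j t * ψ j x)) = 0 := by
    intro t
    have h := flux_zero hα N (fun k => vh k t) f F hf hf0 hF
    simpa using h
  -- derivative of the energy
  have hEderiv : ∀ t ∈ Set.Icc (0:ℝ) T, HasDerivAt E (-2*ε*D t) t := by
    intro t ht
    have hs := hscheme t ht (fun j => vh j t)
    simp only [] at hs
    rw [hmass t, hflux t, hslop t] at hs
    have hEd : HasDerivAt E (∑ k ∈ Finset.range (N+1),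
        2 * vh k t ^ 1 * vh' k t) t := by
      simp only [hE]
      refine HasDerivAt.fun_sum fun k hk => ?_
      have hk' : k ≤ N := by
        have := Finset.mem_range.1 hk; omega
      have h2 := (hvh k hk' t ht).pow 2
      norm_num at h2 ⊢
      exact h2
    convert hEd using 1
    have hsum : ∑ k ∈ Finset.range (N+1), 2 * vh k t ^ 1 * vh' k t
        = 2 * ∑ k ∈ Finset.range (N+1), vh' k t * vh k t := by
      rw [Finset.mul_sum]
      exact Finset.sum_congr rfl fun k _ => by ring
    rw [hsum]
    linarith
  -- continuity of D on [0,T]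
  have hDcont : ContinuousOn D (Set.uIcc (0:ℝ) T) := by
    rw [Set.uIcc_of_le hT.le]
    refine continuousOn_finset_sum _ fun k hk => ?_
    intro t ht
    have hk' : k ≤ N := by have := Finset.mem_range.1 hk; omega
    exact (continuousAt_const.mul ((hvh k hk' t ht).continuousAt.pow 2)).continuousWithinAt
  -- FTC in time
  have hftc : ∫ t in (0:ℝ)..T, (-2*ε*D t) = E T - E 0 := by
    refine intervalIntegral.integral_eq_sub_of_hasDerivAt (fun t ht => hEderiv t ?_) ?_
    · rwa [Set.uIcc_of_le hT.le] at ht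
    · exact (continuousOn_const.mul hDcont).intervalIntegrable
  have hmain : E T + 2*ε*(∫ t in (0:ℝ)..T, D t) = E 0 := by
    have h1 : ∫ t in (0:ℝ)..T, (-2*ε*D t) = (-2*ε) * ∫ t in (0:ℝ)..T, D t := by
      rw [← intervalIntegral.integral_const_mul]
    rw [h1] at hftc
    linarith
  -- inner spatial integral equals D t
  have hDx : ∀ t : ℝ, (∫ x : ℝ, (Dx α (fun x => ∑ k ∈ Finset.range (N + 1),
      vh k t * ψ k x) x)^2) = D t := by
    intro t
    have hpt : ∀ x : ℝ, Dx α (fun x => ∑ k ∈ Finset.range (N + 1), vh k t * ψ k x) x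
        = ∑ m ∈ Finset.range N, (vh (m+1) t * (α * Real.sqrt (2*((m:ℝ)+1)))) * ψ m x := by
      intro x
      have hder : deriv (fun x => ∑ k ∈ Finset.range (N + 1), vh k t * ψ k x) x
          = ∑ k ∈ Finset.range (N+1), vh k t * gHd α k x := (sum_gH_hasDerivAt hα _ _ x).deriv
      have h2 : (∑ k ∈ Finset.range (N+1), vh k t * gHd α k x)
          + α^2*x*(∑ k ∈ Finset.range (N+1), vh k t * ψ k x)
          = ∑ k ∈ Finset.range (N+1), vh k t * (α * Real.sqrt (2*(k:ℝ)) * ψ (k-1) x) := by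
        rw [Finset.mul_sum, ← Finset.sum_add_distrib]
        refine Finset.sum_congr rfl fun k _ => ?_
        have h3 := Dx_gH hα k x
        have h4 : (ψ (k-1) : ℝ → ℝ) = genHermite α (k-1) := rfl
        rw [h4]
        linear_combination (vh k t) * h3
      have h5 : Dx α (fun x => ∑ k ∈ Finset.range (N + 1), vh k t * ψ k x) x
          = ∑ k ∈ Finset.range (N+1), vh k t * (α * Real.sqrt (2*(k:ℝ)) * ψ (k-1) x) := by
        rw [Dx, hder]
        exact h2
      rw [h5, Finset.sum_range_succ'
        (fun k => vh k t * (α * Real.sqrt (2*(k:ℝ)) * ψ (k-1) x)) N]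
      have h6 : vh 0 t * (α * Real.sqrt (2*((0:ℕ):ℝ)) * ψ (0-1) x) = 0 := by
        norm_num
      rw [h6, add_zero]
      refine Finset.sum_congr rfl fun m _ => ?_
      have h7 : ((m+1:ℕ):ℝ) = (m:ℝ)+1 := by push_cast; ring
      rw [Nat.add_sub_cancel, h7]
      ring
    have h8 : ∀ x : ℝ, (Dx α (fun x => ∑ k ∈ Finset.range (N + 1), vh k t * ψ k x) x)^2
        = (∑ m ∈ Finset.range N, (vh (m+1) t * (α * Real.sqrt (2*((m:ℝ)+1)))) * ψ m x)
          * (∑ m ∈ Finset.range N, (vh (m+1) t * (α * Real.sqrt (2*((m:ℝ)+1)))) * ψ m x) := by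
      intro x; rw [hpt x]; ring
    rw [integral_congr_ae (Filter.Eventually.of_forall h8), dot hα]
    simp only [hD]
    rw [Finset.sum_range_succ' (fun k => (2*(k:ℝ)*α^2) * (vh k t)^2) N]
    have h9 : (2*((0:ℕ):ℝ)*α^2) * (vh 0 t)^2 = 0 := by norm_num
    rw [h9, add_zero]
    refine Finset.sum_congr rfl fun m hm => ?_
    rw [if_pos hm]
    have hsq : Real.sqrt (2*((m:ℝ)+1)) * Real.sqrt (2*((m:ℝ)+1)) = 2*((m:ℝ)+1) :=
      Real.mul_self_sqrt (by positivity)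
    have h7 : ((m+1:ℕ):ℝ) = (m:ℝ)+1 := by push_cast; ring
    rw [h7]
    linear_combination (vh (m+1) t)^2*α^2 * hsq
  have hinner : (∫ t in (0:ℝ)..T, ∫ x : ℝ, (Dx α (fun x => ∑ k ∈ Finset.range (N + 1),
        vh k t * ψ k x) x)^2) = ∫ t in (0:ℝ)..T, D t :=
    intervalIntegral.integral_congr fun t _ => hDx t
  -- E T as an integral
  have hET : (∫ x : ℝ, (∑ k ∈ Finset.range (N + 1), vh k T * ψ k x)^2) = E T := by
    have h1 : ∀ x : ℝ, (∑ k ∈ Finset.range (N + 1), vh k T * ψ k x)^2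
        = (∑ k ∈ Finset.range (N + 1), vh k T * ψ k x)
          * (∑ k ∈ Finset.range (N + 1), vh k T * ψ k x) := fun x => by ring
    rw [integral_congr_ae (Filter.Eventually.of_forall h1), dot hα]
    simp only [hE]
    exact Finset.sum_congr rfl fun k hk => by rw [if_pos hk, pow_two]
  -- the initial energy
  have hcoef : ∀ j ∈ Finset.range (N+1), vh j 0 = uh j := by
    intro j hj
    have h1 : (∫ x, (∑ k ∈ Finset.range (N+1), vh k 0 * ψ k x) * ψ j x) = vh j 0 :=
      coef_eq hα _ _ hj
    have h2 : (∫ x, (∑ n ∈ Finset.range (N+1), uh n * ψ n x) * ψ j x) = uh j :=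
      coef_eq hα _ _ hj
    have h3 : ∀ x : ℝ, (∑ k ∈ Finset.range (N+1), vh k 0 * ψ k x)
        = ∑ n ∈ Finset.range (N+1), uh n * ψ n x := by
      intro x
      have := hinit x
      simpa using this
    rw [← h1, integral_congr_ae (Filter.Eventually.of_forall
      fun x => by rw [h3 x]), h2]
  have hE0 : E 0 = ∑ n ∈ Finset.range (N+1), (uh n)^2 := by
    simp only [hE]
    exact Finset.sum_congr rfl fun k hk => by rw [hcoef k hk]
  have hPN : (∫ x : ℝ, (∑ n ∈ Finset.range (N+1), uh n * ψ n x)^2)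
      = ∑ n ∈ Finset.range (N+1), (uh n)^2 := by
    have h1 : ∀ x : ℝ, (∑ n ∈ Finset.range (N+1), uh n * ψ n x)^2
        = (∑ n ∈ Finset.range (N+1), uh n * ψ n x)
          * (∑ n ∈ Finset.range (N+1), uh n * ψ n x) := fun x => by ring
    rw [integral_congr_ae (Filter.Eventually.of_forall h1), hpp]
  constructor
  · rw [hET, hinner, hPN]
    linarith [hmain, hE0]
  · rw [hPN]
    exact hbessel
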